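/- Let c ≥ 0 and let u : ℕ → ℕ → ℝ satisfy: (i) u i j ≥ 0 for all i, j, and (ii) u i j − u i (j+1) ≤ c · u j j whenever j < i. Then for every s : ℕ, ∑_{i=0}^{s−1} u i 0 ≤ ∑_{q=0}^{s−1} (1 + c · (s − 1 − q)) · u q q. -/

import Mathlib

lemma lookahead_aux_sum (f : ℕ → ℝ) (s : ℕ) :
    ∑ i ∈ Finset.range s, ∑ j ∈ Finset.range i, f j
      = ∑ q ∈ Finset.range s, ((s : ℝ) - 1 - (q : ℝ)) * f q := by
  induction s with
  | zero => simp
  | succ s ih =>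
    rw [Finset.sum_range_succ, ih, Finset.sum_range_succ]
    push_cast
    rw [show ((s : ℝ) + 1 - 1 - s) * f s = 0 by ring, add_zero]
    rw [← Finset.sum_add_distrib]
    apply Finset.sum_congr rfl
    intro q _
    ring

theorem lookahead_variance_sum_bound
    (c : ℝ) (hc : 0 ≤ c) (u : ℕ → ℕ → ℝ)
    (hnonneg : ∀ i j, 0 ≤ u i j)
    (hdec : ∀ i j, j < i → u i j - u i (j + 1) ≤ c * u j j)
    (s : ℕ) :
    ∑ i ∈ Finset.range s, u i 0 ≤
      ∑ q ∈ Finset.range s, (1 + c * ((s : ℝ) - 1 - (q : ℝ))) * u q q := by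
  have key : ∀ i, u i 0 ≤ u i i + c * ∑ j ∈ Finset.range i, u j j := by
    intro i
    have h1 : u i 0 - u i i = ∑ j ∈ Finset.range i, (u i j - u i (j + 1)) :=
      (Finset.sum_range_sub' (fun j => u i j) i).symm
    have h2 : ∑ j ∈ Finset.range i, (u i j - u i (j + 1))
        ≤ ∑ j ∈ Finset.range i, c * u j j :=
      Finset.sum_le_sum fun j hj => hdec i j (Finset.mem_range.mp hj)
    rw [← Finset.mul_sum] at h2
    linarith
  calc ∑ i ∈ Finset.range s, u i 0
      ≤ ∑ i ∈ Finset.range s, (u i i + c * ∑ j ∈ Finset.range i, u j j) :=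
        Finset.sum_le_sum fun i _ => key i
    _ = ∑ i ∈ Finset.range s, u i i
        + c * ∑ i ∈ Finset.range s, ∑ j ∈ Finset.range i, u j j := by
        rw [Finset.sum_add_distrib, Finset.mul_sum]
    _ = ∑ q ∈ Finset.range s, (1 + c * ((s : ℝ) - 1 - (q : ℝ))) * u q q := by
        rw [lookahead_aux_sum (fun j => u j j) s, Finset.mul_sum,
          ← Finset.sum_add_distrib]
        apply Finset.sum_congr rfl
        intro q _
        ring
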